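/- There exists a critical value λ₀ > 0 (depending on G, S and α) such that for every λ ≥ λ₀ the unique minimizer x̂ of the nLasso objective h is constant on each connected component of G; moreover, on a connected component K the constant value equals |S ∩ K| / (|S ∩ K| + α |K ∖ S|). -/

import Mathlib

open Finset

/-- Total variation of a graph signal `x` w.r.t. oriented edge set `E` and weights `W`. -/
noncomputable def TV {n : ℕ} (E : Finset (Fin n × Fin n)) (W : Fin n × Fin n → ℝ)
    (x : Fin n → ℝ) : ℝ :=
  ∑ e ∈ E, W e * |x e.1 - x e.2|

/-- The network Lasso objective. -/
noncomputable def nLasso {n : ℕ} (E : Finset (Fin n × Fin n)) (W : Fin n × Fin n → ℝ)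
    (S : Finset (Fin n)) (α lam : ℝ) (x : Fin n → ℝ) : ℝ :=
  ∑ i ∈ S, (x i - 1) ^ 2 / 2 + ∑ i ∈ Sᶜ, α * x i ^ 2 / 2 + lam * TV E W x

/-- Divergence of the flow `y` at node `i`: outgoing minus incoming flow. -/
noncomputable def divg {n : ℕ} (E : Finset (Fin n × Fin n)) (y : Fin n × Fin n → ℝ)
    (i : Fin n) : ℝ :=
  ∑ e ∈ E.filter (fun e => e.1 = i), y e - ∑ e ∈ E.filter (fun e => e.2 = i), y e

/-- The dual (flow) objective of the network Lasso. -/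
noncomputable def dualObj {n : ℕ} (E : Finset (Fin n × Fin n)) (S : Finset (Fin n))
    (α : ℝ) (y : Fin n × Fin n → ℝ) : ℝ :=
  -∑ i ∈ S, (divg E y i ^ 2 / 2 - divg E y i) - ∑ i ∈ Sᶜ, divg E y i ^ 2 / (2 * α)

/-- The boundary of a node set `C`: edges with exactly one endpoint in `C`. -/
def bdry {n : ℕ} (E : Finset (Fin n × Fin n)) (C : Finset (Fin n)) :
    Finset (Fin n × Fin n) :=
  E.filter (fun e => (e.1 ∈ C ∧ e.2 ∉ C) ∨ (e.1 ∉ C ∧ e.2 ∈ C))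

/-- Reachability in the (undirected) graph with oriented edge set `E`. -/
def Reach {n : ℕ} (E : Finset (Fin n × Fin n)) : Fin n → Fin n → Prop :=
  Relation.ReflTransGen (fun i j => (i, j) ∈ E ∨ (j, i) ∈ E)

namespace NLassoAux

variable {n : ℕ}

lemma reach_refl (E : Finset (Fin n × Fin n)) (i : Fin n) : Reach E i i :=
  Relation.ReflTransGen.refl

lemma reach_symm {E : Finset (Fin n × Fin n)} {i j : Fin n} (h : Reach E i j) : Reach E j i :=
  (@Relation.ReflTransGen.symmetric _ _ ⟨fun _ _ hab => hab.symm⟩).symm _ _ h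

lemma reach_trans {E : Finset (Fin n × Fin n)} {i j k : Fin n}
    (h1 : Reach E i j) (h2 : Reach E j k) : Reach E i k := h1.trans h2

noncomputable def comp (E : Finset (Fin n × Fin n)) (i : Fin n) : Finset (Fin n) :=
  @Finset.filter _ (fun j => Reach E i j) (fun _ => Classical.propDecidable _) Finset.univ

lemma mem_comp {E : Finset (Fin n × Fin n)} {i j : Fin n} :
    j ∈ comp E i ↔ Reach E i j := by
  simp [comp]

lemma comp_eq {E : Finset (Fin n × Fin n)} {i j : Fin n} (h : Reach E i j) :
    comp E i = comp E j := by
  ext k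
  simp only [mem_comp]
  exact ⟨fun hk => reach_trans (reach_symm h) hk, fun hk => reach_trans h hk⟩

noncomputable def den (E : Finset (Fin n × Fin n)) (S : Finset (Fin n)) (α : ℝ) (i : Fin n) : ℝ :=
  ((S ∩ comp E i).card : ℝ) + α * (((comp E i) \ S).card : ℝ)

noncomputable def cval (E : Finset (Fin n × Fin n)) (S : Finset (Fin n)) (α : ℝ) (i : Fin n) : ℝ :=
  ((S ∩ comp E i).card : ℝ) / den E S α i

lemma den_pos {E : Finset (Fin n × Fin n)} {S : Finset (Fin n)} {α : ℝ} (hα : 0 < α) (i : Fin n) :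
    0 < den E S α i := by
  unfold den
  by_cases hi : i ∈ S
  · have h1 : i ∈ S ∩ comp E i := Finset.mem_inter.2 ⟨hi, mem_comp.2 (reach_refl E i)⟩
    have h2 : 0 < (S ∩ comp E i).card := Finset.card_pos.2 ⟨i, h1⟩
    have h3 : (1 : ℝ) ≤ ((S ∩ comp E i).card : ℝ) := by exact_mod_cast h2
    have h4 : (0 : ℝ) ≤ α * (((comp E i) \ S).card : ℝ) := by positivity
    linarith
  · have h1 : i ∈ (comp E i) \ S := Finset.mem_sdiff.2 ⟨mem_comp.2 (reach_refl E i), hi⟩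
    have h2 : 0 < ((comp E i) \ S).card := Finset.card_pos.2 ⟨i, h1⟩
    have h3 : (1 : ℝ) ≤ (((comp E i) \ S).card : ℝ) := by exact_mod_cast h2
    nlinarith [(Nat.cast_nonneg (S ∩ comp E i).card : (0:ℝ) ≤ _)]

lemma cval_nonneg {E : Finset (Fin n × Fin n)} {S : Finset (Fin n)} {α : ℝ} (hα : 0 < α)
    (i : Fin n) : 0 ≤ cval E S α i :=
  div_nonneg (Nat.cast_nonneg _) (den_pos hα i).le

lemma cval_le_one {E : Finset (Fin n × Fin n)} {S : Finset (Fin n)} {α : ℝ} (hα : 0 < α)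
    (i : Fin n) : cval E S α i ≤ 1 := by
  unfold cval
  rw [div_le_one (den_pos hα i)]
  unfold den
  nlinarith [(Nat.cast_nonneg ((comp E i) \ S).card : (0:ℝ) ≤ _)]

lemma cval_eq_of_reach {E : Finset (Fin n × Fin n)} {S : Finset (Fin n)} {α : ℝ} {i j : Fin n}
    (h : Reach E i j) : cval E S α i = cval E S α j := by
  unfold cval den
  rw [comp_eq h]

noncomputable def gfun (E : Finset (Fin n × Fin n)) (S : Finset (Fin n)) (α : ℝ) : Fin n → ℝ :=
  fun i => if i ∈ S then cval E S α i - 1 else α * cval E S α i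

lemma abs_gfun_le {E : Finset (Fin n × Fin n)} {S : Finset (Fin n)} {α : ℝ} (hα : 0 < α)
    (i : Fin n) : |gfun E S α i| ≤ max 1 α := by
  have h0 := cval_nonneg (E := E) (S := S) hα i
  have h1 := cval_le_one (E := E) (S := S) hα i
  have hm1 : (1:ℝ) ≤ max 1 α := le_max_left _ _
  have hm2 : α ≤ max 1 α := le_max_right _ _
  unfold gfun
  split <;> rw [abs_le] <;> constructor <;> nlinarith

lemma cval_mul_den {E : Finset (Fin n × Fin n)} {S : Finset (Fin n)} {α : ℝ} (hα : 0 < α)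
    (i : Fin n) : cval E S α i * den E S α i = ((S ∩ comp E i).card : ℝ) :=
  div_mul_cancel₀ _ (den_pos hα i).ne'

lemma sum_g_comp {E : Finset (Fin n × Fin n)} {S : Finset (Fin n)} {α : ℝ} (hα : 0 < α)
    (r : Fin n) : ∑ i ∈ comp E r, gfun E S α i = 0 := by
  classical
  have hc : ∀ i ∈ comp E r, gfun E S α i =
      if i ∈ S then cval E S α r - 1 else α * cval E S α r := by
    intro i hi
    unfold gfun
    rw [cval_eq_of_reach (reach_symm (mem_comp.1 hi))]
  rw [Finset.sum_congr rfl hc, Finset.sum_ite, Finset.sum_const, Finset.sum_const,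
    nsmul_eq_mul, nsmul_eq_mul]
  have hf1 : (comp E r).filter (fun i => i ∈ S) = S ∩ comp E r := by
    ext k; simp [Finset.mem_inter, and_comm]
  have hf2 : (comp E r).filter (fun i => i ∉ S) = (comp E r) \ S := by
    ext k; simp [Finset.mem_sdiff]
  rw [hf1, hf2]
  have key := cval_mul_den (E := E) (S := S) hα r
  unfold den at key
  linear_combination key

/-! ### Graph walk bound -/

def graphOf (E : Finset (Fin n × Fin n)) (hE : ∀ e ∈ E, e.1 < e.2) : SimpleGraph (Fin n) where
  Adj i j := (i, j) ∈ E ∨ (j, i) ∈ E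
  symm := ⟨fun _ _ h => h.symm⟩
  loopless := ⟨fun i h => by
    rcases h with h | h <;> exact absurd (hE _ h) (lt_irrefl i)⟩

noncomputable def wmin (E : Finset (Fin n × Fin n)) (W : Fin n × Fin n → ℝ) : ℝ :=
  if h : E.Nonempty then E.inf' h W else 1

lemma wmin_pos {E : Finset (Fin n × Fin n)} {W : Fin n × Fin n → ℝ}
    (hW : ∀ e ∈ E, 0 < W e) : 0 < wmin E W := by
  unfold wmin
  split
  · rw [Finset.lt_inf'_iff]; exact hW
  · norm_num

lemma wmin_le {E : Finset (Fin n × Fin n)} {W : Fin n × Fin n → ℝ} {e : Fin n × Fin n}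
    (he : e ∈ E) : wmin E W ≤ W e := by
  unfold wmin
  rw [dif_pos ⟨e, he⟩]
  exact Finset.inf'_le _ he

lemma TV_nonneg {E : Finset (Fin n × Fin n)} {W : Fin n × Fin n → ℝ}
    (hW : ∀ e ∈ E, 0 < W e) (u : Fin n → ℝ) : 0 ≤ TV E W u :=
  Finset.sum_nonneg fun e he => mul_nonneg (hW e he).le (abs_nonneg _)

lemma step_bound {E : Finset (Fin n × Fin n)} {W : Fin n × Fin n → ℝ}
    (hW : ∀ e ∈ E, 0 < W e) (u : Fin n → ℝ) {a b : Fin n}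
    (hadj : (a, b) ∈ E ∨ (b, a) ∈ E) :
    |u a - u b| ≤ TV E W u / wmin E W := by
  rw [le_div_iff₀ (wmin_pos hW)]
  have habs : |u b - u a| = |u a - u b| := abs_sub_comm _ _
  rcases hadj with h | h
  · have h1 : W (a, b) * |u a - u b| ≤ TV E W u :=
      Finset.single_le_sum (f := fun e => W e * |u e.1 - u e.2|)
        (fun e he => mul_nonneg (hW e he).le (abs_nonneg _)) h
    have h2 : wmin E W ≤ W (a, b) := wmin_le h
    nlinarith [abs_nonneg (u a - u b)]
  · have h1 : W (b, a) * |u b - u a| ≤ TV E W u :=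
      Finset.single_le_sum (f := fun e => W e * |u e.1 - u e.2|)
        (fun e he => mul_nonneg (hW e he).le (abs_nonneg _)) h
    have h2 : wmin E W ≤ W (b, a) := wmin_le h
    rw [← habs]
    nlinarith [abs_nonneg (u b - u a)]

lemma walk_bound {G : SimpleGraph (Fin n)} (u : Fin n → ℝ) (B : ℝ) (hB : 0 ≤ B)
    (hstep : ∀ a b : Fin n, G.Adj a b → |u a - u b| ≤ B) :
    ∀ {i j : Fin n} (p : G.Walk i j), |u i - u j| ≤ p.length * B := by
  intro i j p
  induction p with
  | nil => simp
  | @cons a b c h p ih =>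
    have h1 : |u a - u c| ≤ |u a - u b| + |u b - u c| := abs_sub_le _ _ _
    have h2 := hstep a b h
    have h3 : ((SimpleGraph.Walk.cons h p).length : ℝ) = p.length + 1 := by
      simp [SimpleGraph.Walk.length_cons]
    rw [h3]
    linarith

lemma reach_bound {E : Finset (Fin n × Fin n)} {W : Fin n × Fin n → ℝ}
    (hE : ∀ e ∈ E, e.1 < e.2) (hW : ∀ e ∈ E, 0 < W e) (u : Fin n → ℝ) {i j : Fin n}
    (h : Reach E i j) :
    |u i - u j| ≤ n * (TV E W u / wmin E W) := by
  have hB : 0 ≤ TV E W u / wmin E W := div_nonneg (TV_nonneg hW u) (wmin_pos hW).le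
  have hreach : (graphOf E hE).Reachable i j :=
    (SimpleGraph.reachable_iff_reflTransGen i j).2 h
  obtain ⟨p⟩ := hreach
  have hq := walk_bound u _ hB (fun a b hab => step_bound hW u hab) (p.toPath : (graphOf E hE).Walk i j)
  have hlen : ((p.toPath : (graphOf E hE).Walk i j).length : ℝ) ≤ n := by
    have := SimpleGraph.Walk.IsPath.length_lt (p.toPath.2)
    rw [Fintype.card_fin] at this
    exact_mod_cast this.le
  calc |u i - u j| ≤ ((p.toPath : (graphOf E hE).Walk i j).length : ℝ) * (TV E W u / wmin E W) := hq
    _ ≤ n * (TV E W u / wmin E W) := mul_le_mul_of_nonneg_right hlen hB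

/-! ### Representative and inner bound -/

lemma min'_congr {s t : Finset (Fin n)} (h : s = t) (hs : s.Nonempty) (ht : t.Nonempty) :
    s.min' hs = t.min' ht := by subst h; rfl

noncomputable def rho (E : Finset (Fin n × Fin n)) (i : Fin n) : Fin n :=
  (comp E i).min' ⟨i, mem_comp.2 (reach_refl E i)⟩

lemma reach_rho (E : Finset (Fin n × Fin n)) (i : Fin n) : Reach E i (rho E i) :=
  mem_comp.1 (Finset.min'_mem _ _)

lemma rho_eq_of_reach {E : Finset (Fin n × Fin n)} {i j : Fin n} (h : Reach E i j) :
    rho E i = rho E j :=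
  min'_congr (comp_eq h) _ _

lemma sum_g_fiber {E : Finset (Fin n × Fin n)} {S : Finset (Fin n)} {α : ℝ} (hα : 0 < α)
    (r : Fin n) :
    ∑ i ∈ Finset.univ.filter (fun i => rho E i = r), gfun E S α i = 0 := by
  classical
  by_cases hfib : (Finset.univ.filter (fun i => rho E i = r)).Nonempty
  · obtain ⟨i₀, hi₀⟩ := hfib
    have hi₀r : rho E i₀ = r := (Finset.mem_filter.1 hi₀).2
    have hri₀ : Reach E r i₀ := reach_symm (hi₀r ▸ reach_rho E i₀)
    have hrr : rho E r = r := by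
      rw [rho_eq_of_reach hri₀, hi₀r]
    have hset : Finset.univ.filter (fun i => rho E i = r) = comp E r := by
      ext k
      simp only [Finset.mem_filter, Finset.mem_univ, true_and, mem_comp]
      constructor
      · intro hk
        exact reach_symm (hk ▸ reach_rho E k)
      · intro hk
        rw [rho_eq_of_reach (reach_symm hk), hrr]
    rw [hset]
    exact sum_g_comp hα r
  · rw [Finset.not_nonempty_iff_eq_empty] at hfib
    simp [hfib]

lemma sum_g_mul {E : Finset (Fin n × Fin n)} {S : Finset (Fin n)} {α : ℝ} (hα : 0 < α)
    (u : Fin n → ℝ) :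
    ∑ i, gfun E S α i * u i = ∑ i, gfun E S α i * (u i - u (rho E i)) := by
  classical
  have h0 : ∑ i, gfun E S α i * u (rho E i) = 0 := by
    rw [← Finset.sum_fiberwise Finset.univ (fun i => rho E i)
      (fun i => gfun E S α i * u (rho E i))]
    apply Finset.sum_eq_zero
    intro r _
    have hcong : ∀ i ∈ Finset.univ.filter (fun i => rho E i = r),
        gfun E S α i * u (rho E i) = gfun E S α i * u r := by
      intro i hi
      rw [(Finset.mem_filter.1 hi).2]
    rw [Finset.sum_congr rfl hcong, ← Finset.sum_mul, sum_g_fiber hα r, zero_mul]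
  calc ∑ i, gfun E S α i * u i
      = ∑ i, (gfun E S α i * (u i - u (rho E i)) + gfun E S α i * u (rho E i)) := by
        apply Finset.sum_congr rfl; intros; ring
    _ = ∑ i, gfun E S α i * (u i - u (rho E i)) + ∑ i, gfun E S α i * u (rho E i) :=
        Finset.sum_add_distrib
    _ = ∑ i, gfun E S α i * (u i - u (rho E i)) := by rw [h0, add_zero]

lemma inner_bound {E : Finset (Fin n × Fin n)} {W : Fin n × Fin n → ℝ} {S : Finset (Fin n)}
    {α : ℝ} (hE : ∀ e ∈ E, e.1 < e.2) (hW : ∀ e ∈ E, 0 < W e) (hα : 0 < α) (u : Fin n → ℝ) :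
    |∑ i, gfun E S α i * u i| ≤ (n * n * max 1 α / wmin E W) * TV E W u := by
  have hB : 0 ≤ TV E W u / wmin E W := div_nonneg (TV_nonneg hW u) (wmin_pos hW).le
  have hmax : (0:ℝ) ≤ max 1 α := le_trans zero_le_one (le_max_left _ _)
  rw [sum_g_mul hα]
  calc |∑ i, gfun E S α i * (u i - u (rho E i))|
      ≤ ∑ i, |gfun E S α i * (u i - u (rho E i))| := Finset.abs_sum_le_sum_abs _ _
    _ ≤ ∑ _i : Fin n, max 1 α * (n * (TV E W u / wmin E W)) := by
        apply Finset.sum_le_sum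
        intro i _
        rw [abs_mul]
        exact mul_le_mul (abs_gfun_le hα i) (reach_bound hE hW u (reach_rho E i))
          (abs_nonneg _) hmax
    _ = n * (max 1 α * (n * (TV E W u / wmin E W))) := by
        rw [Finset.sum_const, Finset.card_univ, Fintype.card_fin, nsmul_eq_mul]
    _ = (n * n * max 1 α / wmin E W) * TV E W u := by
        field_simp

/-! ### Expansion of the objective around the candidate minimizer -/

lemma cval_edge_eq {E : Finset (Fin n × Fin n)} {S : Finset (Fin n)} {α : ℝ}
    {e : Fin n × Fin n} (he : e ∈ E) : cval E S α e.1 = cval E S α e.2 :=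
  cval_eq_of_reach (Relation.ReflTransGen.single (Or.inl he))

lemma TV_cval_zero (E : Finset (Fin n × Fin n)) (W : Fin n × Fin n → ℝ)
    (S : Finset (Fin n)) (α : ℝ) : TV E W (fun i => cval E S α i) = 0 := by
  apply Finset.sum_eq_zero
  intro e he
  show W e * |cval E S α e.1 - cval E S α e.2| = 0
  rw [cval_edge_eq he]
  simp

lemma TV_sub_cval (E : Finset (Fin n × Fin n)) (W : Fin n × Fin n → ℝ)
    (S : Finset (Fin n)) (α : ℝ) (z : Fin n → ℝ) :
    TV E W (fun i => z i - cval E S α i) = TV E W z := by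
  apply Finset.sum_congr rfl
  intro e he
  have h := cval_edge_eq (S := S) (α := α) he
  show W e * |(z e.1 - cval E S α e.1) - (z e.2 - cval E S α e.2)| = W e * |z e.1 - z e.2|
  have h2 : (z e.1 - cval E S α e.2) - (z e.2 - cval E S α e.2) = z e.1 - z e.2 := by ring
  rw [h, h2]

lemma sum_g_split {E : Finset (Fin n × Fin n)} {S : Finset (Fin n)} {α : ℝ} (v : Fin n → ℝ) :
    ∑ i, gfun E S α i * v i
      = ∑ i ∈ S, (cval E S α i - 1) * v i + ∑ i ∈ Sᶜ, (α * cval E S α i) * v i := by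
  classical
  rw [← Finset.sum_add_sum_compl S (fun i => gfun E S α i * v i)]
  congr 1
  · apply Finset.sum_congr rfl
    intro i hi
    simp [gfun, hi]
  · apply Finset.sum_congr rfl
    intro i hi
    rw [Finset.mem_compl] at hi
    simp [gfun, hi]

lemma expand (E : Finset (Fin n × Fin n)) (W : Fin n × Fin n → ℝ)
    (S : Finset (Fin n)) (α lam : ℝ) (z : Fin n → ℝ) :
    nLasso E W S α lam z - nLasso E W S α lam (fun i => cval E S α i)
      = (∑ i, gfun E S α i * (z i - cval E S α i))
        + (∑ i ∈ S, (z i - cval E S α i) ^ 2 / 2 + ∑ i ∈ Sᶜ, α * (z i - cval E S α i) ^ 2 / 2)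
        + lam * TV E W z := by
  have e1 : ∑ i ∈ S, (z i - 1) ^ 2 / 2
      = ∑ i ∈ S, (cval E S α i - 1) ^ 2 / 2
        + ∑ i ∈ S, (cval E S α i - 1) * (z i - cval E S α i)
        + ∑ i ∈ S, (z i - cval E S α i) ^ 2 / 2 := by
    rw [← Finset.sum_add_distrib, ← Finset.sum_add_distrib]
    apply Finset.sum_congr rfl
    intros; ring
  have e2 : ∑ i ∈ Sᶜ, α * z i ^ 2 / 2
      = ∑ i ∈ Sᶜ, α * cval E S α i ^ 2 / 2
        + ∑ i ∈ Sᶜ, (α * cval E S α i) * (z i - cval E S α i)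
        + ∑ i ∈ Sᶜ, α * (z i - cval E S α i) ^ 2 / 2 := by
    rw [← Finset.sum_add_distrib, ← Finset.sum_add_distrib]
    apply Finset.sum_congr rfl
    intros; ring
  have e3 := sum_g_split (E := E) (S := S) (α := α) (fun i => z i - cval E S α i)
  unfold nLasso
  rw [TV_cval_zero, e1, e2, e3]
  ring

lemma quad_nonneg {E : Finset (Fin n × Fin n)} {S : Finset (Fin n)} {α : ℝ} (hα : 0 < α)
    (z : Fin n → ℝ) :
    0 ≤ ∑ i ∈ S, (z i - cval E S α i) ^ 2 / 2 + ∑ i ∈ Sᶜ, α * (z i - cval E S α i) ^ 2 / 2 := by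
  have h1 : 0 ≤ ∑ i ∈ S, (z i - cval E S α i) ^ 2 / 2 :=
    Finset.sum_nonneg fun i _ => by positivity
  have h2 : 0 ≤ ∑ i ∈ Sᶜ, α * (z i - cval E S α i) ^ 2 / 2 :=
    Finset.sum_nonneg fun i _ => by positivity
  linarith

lemma quad_eq_zero {E : Finset (Fin n × Fin n)} {S : Finset (Fin n)} {α : ℝ} (hα : 0 < α)
    {z : Fin n → ℝ}
    (h : ∑ i ∈ S, (z i - cval E S α i) ^ 2 / 2 + ∑ i ∈ Sᶜ, α * (z i - cval E S α i) ^ 2 / 2 = 0)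
    (i : Fin n) : z i = cval E S α i := by
  have h1 : 0 ≤ ∑ i ∈ S, (z i - cval E S α i) ^ 2 / 2 :=
    Finset.sum_nonneg fun i _ => by positivity
  have h2 : 0 ≤ ∑ i ∈ Sᶜ, α * (z i - cval E S α i) ^ 2 / 2 :=
    Finset.sum_nonneg fun i _ => by positivity
  have hz1 : ∑ i ∈ S, (z i - cval E S α i) ^ 2 / 2 = 0 := by linarith
  have hz2 : ∑ i ∈ Sᶜ, α * (z i - cval E S α i) ^ 2 / 2 = 0 := by linarith
  by_cases hi : i ∈ S
  · have := (Finset.sum_eq_zero_iff_of_nonneg (fun i _ => by positivity)).1 hz1 i hi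
    have h0 : (z i - cval E S α i) ^ 2 = 0 := by linarith
    have := pow_eq_zero_iff (n := 2) (by norm_num) |>.1 h0
    linarith
  · have := (Finset.sum_eq_zero_iff_of_nonneg (fun i _ => by positivity)).1 hz2 i
      (Finset.mem_compl.2 hi)
    have h0 : (z i - cval E S α i) ^ 2 = 0 := by
      nlinarith [sq_nonneg (z i - cval E S α i)]
    have := pow_eq_zero_iff (n := 2) (by norm_num) |>.1 h0
    linarith

end NLassoAux



open NLassoAux in
/-- There is a critical value `λ₀ > 0` such that for every `λ ≥ λ₀` the unique
nLasso minimizer is constant on each connected component of `G`, with constant value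
`|S ∩ K| / (|S ∩ K| + α |K ∖ S|)` on a connected component `K`. -/
theorem exists_critical_lambda_constant_on_components
    (n : ℕ) (E : Finset (Fin n × Fin n)) (hE : ∀ e ∈ E, e.1 < e.2)
    (W : Fin n × Fin n → ℝ) (hW : ∀ e ∈ E, 0 < W e)
    (S : Finset (Fin n)) (hS : S.Nonempty) (α : ℝ) (hα : 0 < α) :
    ∃ lam₀ : ℝ, 0 < lam₀ ∧ ∀ lam : ℝ, lam₀ ≤ lam →
      ∀ xhat : Fin n → ℝ,
        (∀ z : Fin n → ℝ, nLasso E W S α lam xhat ≤ nLasso E W S α lam z) →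
        (∀ i j : Fin n, Reach E i j → xhat i = xhat j) ∧
        (∀ i : Fin n,
          xhat i =
            (((S : Set (Fin n)) ∩ {j | Reach E i j}).ncard : ℝ) /
              ((((S : Set (Fin n)) ∩ {j | Reach E i j}).ncard : ℝ) +
                α * (({j | Reach E i j} \ (S : Set (Fin n))).ncard : ℝ))) := by
  have hwpos := wmin_pos hW
  set K : ℝ := n * n * max 1 α / wmin E W with hKdef
  have hK0 : 0 ≤ K := by
    apply div_nonneg _ hwpos.le
    have : (0:ℝ) ≤ max 1 α := le_trans zero_le_one (le_max_left _ _)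
    positivity
  refine ⟨K + 1, by linarith, ?_⟩
  intro lam hlam xhat hmin
  have hexp := expand E W S α lam xhat
  have hTVx := TV_nonneg hW xhat
  have hinner := inner_bound (S := S) hE hW hα (fun i => xhat i - cval E S α i)
  rw [TV_sub_cval] at hinner
  have habs : -(K * TV E W xhat) ≤ ∑ i, gfun E S α i * (xhat i - cval E S α i) :=
    neg_le_of_abs_le hinner
  have hmin' := hmin (fun i => cval E S α i)
  have hquad := quad_nonneg (E := E) (S := S) hα xhat
  have hl : (K + 1) * TV E W xhat ≤ lam * TV E W xhat :=
    mul_le_mul_of_nonneg_right hlam hTVx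
  have hzero : ∑ i ∈ S, (xhat i - cval E S α i) ^ 2 / 2
      + ∑ i ∈ Sᶜ, α * (xhat i - cval E S α i) ^ 2 / 2 = 0 := by
    nlinarith
  have heq : ∀ i : Fin n, xhat i = cval E S α i := fun i => quad_eq_zero hα hzero i
  constructor
  · intro i j hij
    rw [heq i, heq j]
    exact cval_eq_of_reach hij
  · intro i
    rw [heq i]
    have hset : {j | Reach E i j} = ((comp E i : Finset (Fin n)) : Set (Fin n)) := by
      ext j; simp [mem_comp]
    rw [hset, ← Finset.coe_inter, ← Finset.coe_sdiff, Set.ncard_coe_finset,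
      Set.ncard_coe_finset]
    rfl
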